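/- arXiv:2209.14328 — 7 statements merged into one kernel-verified Lean document; each statement's English description precedes it below -/
import Mathlib

section
/- For square complex matrices A, V ∈ M_n(ℂ), the map h ↦ exp(A + h·V) (matrix exponential) is differentiable at h = 0 with derivative equal to ∫₀¹ exp((1−τ)·A) · V · exp(τ·A) dτ. -/
open Matrix MeasureTheory intervalIntegral

attribute [local instance] Matrix.linftyOpNormedAddCommGroup Matrix.linftyOpNormedSpace
  Matrix.linftyOpNormedRing Matrix.linftyOpNormedAlgebra

open NormedSpace

variable {n : ℕ}

lemma aux_expDeriv (B : Matrix (Fin n) (Fin n) ℂ) (t : ℝ) :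
    HasDerivAt (fun τ : ℝ => exp (τ • B)) (B * exp (t • B)) t := by
  have h := hasDerivAt_exp_smul_const' (𝕂 := ℝ) B t
  exact h

lemma aux_expCont (B : Matrix (Fin n) (Fin n) ℂ) :
    Continuous (fun τ : ℝ => exp (τ • B)) :=
  exp_continuous.comp (continuous_id.smul continuous_const)

lemma aux_duhamel (B C : Matrix (Fin n) (Fin n) ℂ) :
    exp C - exp B =
      ∫ τ in (0:ℝ)..1, exp ((1 - τ) • B) * (C - B) * exp (τ • C) := by
  have key : ∀ t ∈ Set.uIcc (0:ℝ) 1,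
      HasDerivAt (fun τ : ℝ => exp ((1 - τ) • B) * exp (τ • C))
        (exp ((1 - t) • B) * (C - B) * exp (t • C)) t := by
    intro t _
    have h1 : HasDerivAt (fun τ : ℝ => exp ((1 - τ) • B))
        (-(B * exp ((1 - t) • B))) t := by
      have h0 := (aux_expDeriv B (1 - t)).scomp t ((hasDerivAt_id t).const_sub 1)
      simp at h0; exact h0
    have h2 := aux_expDeriv C t
    have h := h1.mul h2
    refine h.congr_deriv ?_
    have hc : Commute B (exp ((1 - t) • B)) :=
      ((Commute.refl B).smul_right (1 - t)).exp_right
    rw [mul_sub, sub_mul]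
    rw [← hc.eq]
    noncomm_ring
  have hint : @IntervalIntegrable _ _ NormedAddCommGroup.toENormedAddCommMonoid.toENormedAddMonoid
      (fun τ : ℝ => exp ((1 - τ) • B) * (C - B) * exp (τ • C))
      volume 0 1 := by
    apply Continuous.intervalIntegrable
    exact ((exp_continuous.comp ((continuous_const.sub continuous_id).smul
      continuous_const)).mul continuous_const).mul (aux_expCont C)
  have := intervalIntegral.integral_eq_sub_of_hasDerivAt key hint
  rw [this]
  simp [exp_zero]

lemma aux_key (A V : Matrix (Fin n) (Fin n) ℂ) (h : ℝ) :
    exp (A + (h : ℂ) • V) - exp A =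
      h • ∫ τ in (0:ℝ)..1,
        exp ((1 - τ) • A) * V * exp (τ • (A + (h : ℂ) • V)) := by
  rw [aux_duhamel A (A + (h : ℂ) • V), add_sub_cancel_left]
  rw [← intervalIntegral.integral_smul]
  congr 1
  ext τ
  rw [mul_smul_comm, smul_mul_assoc, Complex.coe_smul]

lemma aux_Gcont (A V : Matrix (Fin n) (Fin n) ℂ) :
    Continuous (fun h : ℝ => ∫ τ in (0:ℝ)..1,
      exp ((1 - τ) • A) * V * exp (τ • (A + (h : ℂ) • V))) := by
  apply intervalIntegral.continuous_parametric_intervalIntegral_of_continuous'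
  apply Continuous.mul
  · apply Continuous.mul
    · exact exp_continuous.comp
        ((continuous_const.sub continuous_snd).smul continuous_const)
    · exact continuous_const
  · exact exp_continuous.comp (continuous_snd.smul (continuous_const.add
      ((Complex.continuous_ofReal.comp continuous_fst).smul continuous_const)))

/-- For square complex matrices `A, V ∈ Mₙ(ℂ)`, the map `h ↦ exp (A + h • V)` (matrix
exponential) is differentiable at `h = 0` with derivative
`∫₀¹ exp ((1 - τ) • A) * V * exp (τ • A) dτ`. -/
theorem derivative_of_matrix_exponential (n : ℕ) (hn : 1 ≤ n)
    (A V : Matrix (Fin n) (Fin n) ℂ) :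
    HasDerivAt (fun h : ℝ => NormedSpace.exp (A + (h : ℂ) • V))
      (∫ τ in (0:ℝ)..1,
        NormedSpace.exp (((1 : ℂ) - (τ : ℂ)) • A) * V * NormedSpace.exp ((τ : ℂ) • A))
      0 := by
  set G : ℝ → Matrix (Fin n) (Fin n) ℂ := fun h => ∫ τ in (0:ℝ)..1,
      exp ((1 - τ) • A) * V * exp (τ • (A + (h : ℂ) • V)) with hG
  have htarget : (∫ τ in (0:ℝ)..1,
      exp (((1 : ℂ) - (τ : ℂ)) • A) * V * exp ((τ : ℂ) • A)) = G 0 := by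
    rw [hG]
    simp only [Complex.ofReal_zero, zero_smul, add_zero]
    congr 1
    ext τ
    rw [show ((1:ℂ) - (τ:ℂ)) = ((1 - τ : ℝ) : ℂ) by push_cast; ring,
      Complex.coe_smul, Complex.coe_smul]
  rw [htarget]
  refine hasDerivAt_iff_isLittleO.2 ?_
  have hEq : ∀ h : ℝ, exp (A + (h : ℂ) • V) - exp (A + ((0:ℝ) : ℂ) • V)
      - (h - 0) • G 0 = h • (G h - G 0) := by
    intro h
    rw [smul_sub, sub_zero]
    simp only [Complex.ofReal_zero, zero_smul, add_zero]
    rw [← aux_key A V h]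
  have hlo : (fun h : ℝ => h • (G h - G 0)) =o[nhds 0] (fun h : ℝ => h) := by
    have h1 : (fun h : ℝ => G h - G 0) =o[nhds 0] (fun _ : ℝ => (1:ℝ)) := by
      rw [Asymptotics.isLittleO_one_iff]
      have := ((aux_Gcont A V).tendsto 0).sub_const (G 0)
      rw [sub_self] at this
      exact this
    have h2 := (Asymptotics.isBigO_refl (fun h : ℝ => h) (nhds 0)).smul_isLittleO h1
    simpa using h2
  exact hlo.congr' (by filter_upwards with h; exact (hEq h).symm) (by simp)
end

section
/- (Derivative of the singular values.) Let n ≥ 1 and let A, U, S, V : ℝ → M_n(ℂ) be differentiable at t₀ ∈ ℝ with A(t) = U(t) S(t) V(t)* for all t in a neighborhood of t₀, where U(t) and V(t) are unitary and S(t) is diagonal with real entries s_1(t), …, s_n(t). Set Ã = U(t₀)* A'(t₀) V(t₀), where ' denotes the derivative at t₀ and * the conjugate transpose. Then for every i, s_i'(t₀) = Re(Ã_{ii}). -/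
open Matrix

private lemma entry_mul_deriv {n : ℕ} (X Y : ℝ → Matrix (Fin n) (Fin n) ℂ)
    (X' Y' : Matrix (Fin n) (Fin n) ℂ) (t₀ : ℝ)
    (hX : ∀ i j, HasDerivAt (fun t => X t i j) (X' i j) t₀)
    (hY : ∀ i j, HasDerivAt (fun t => Y t i j) (Y' i j) t₀) :
    ∀ i j, HasDerivAt (fun t => (X t * Y t) i j)
      ((X' * Y t₀ + X t₀ * Y') i j) t₀ := by
  intro i j
  simp only [Matrix.mul_apply, Matrix.add_apply]
  rw [← Finset.sum_add_distrib]
  exact HasDerivAt.fun_sum fun k _ => (hX i k).mul (hY k j)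

private lemma entry_conjT_deriv {n : ℕ} (X : ℝ → Matrix (Fin n) (Fin n) ℂ)
    (X' : Matrix (Fin n) (Fin n) ℂ) (t₀ : ℝ)
    (hX : ∀ i j, HasDerivAt (fun t => X t i j) (X' i j) t₀) :
    ∀ i j, HasDerivAt (fun t => (X t)ᴴ i j) (X'ᴴ i j) t₀ := by
  intro i j
  simpa [Matrix.conjTranspose_apply] using (hX j i).star

private lemma skew_diag {n : ℕ} (U : ℝ → Matrix (Fin n) (Fin n) ℂ)
    (U' : Matrix (Fin n) (Fin n) ℂ) (t₀ : ℝ)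
    (hU' : ∀ i j, HasDerivAt (fun t => U t i j) (U' i j) t₀)
    (hU : ∀ᶠ t in nhds t₀, U t ∈ Matrix.unitaryGroup (Fin n) ℂ) :
    ∀ i, (((U t₀)ᴴ * U') i i).re = 0 := by
  intro i
  have hderiv : HasDerivAt (fun t => ((U t)ᴴ * U t) i i)
      ((U'ᴴ * U t₀ + (U t₀)ᴴ * U') i i) t₀ :=
    entry_mul_deriv (fun t => (U t)ᴴ) U U'ᴴ U' t₀ (entry_conjT_deriv U U' t₀ hU') hU' i i
  have hconst : HasDerivAt (fun t => ((U t)ᴴ * U t) i i) 0 t₀ := by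
    have h1 : (fun t => ((U t)ᴴ * U t) i i) =ᶠ[nhds t₀] fun _ => ((1 : Matrix (Fin n) (Fin n) ℂ) i i) := by
      filter_upwards [hU] with t ht
      rw [show (U t)ᴴ * U t = 1 from (Matrix.mem_unitaryGroup_iff'.mp ht)]
    exact (hasDerivAt_const t₀ _).congr_of_eventuallyEq h1
  have h0 : (U'ᴴ * U t₀ + (U t₀)ᴴ * U') i i = 0 := hderiv.unique hconst
  have hconj : (U'ᴴ * U t₀) i i = star (((U t₀)ᴴ * U') i i) := by
    have : U'ᴴ * U t₀ = ((U t₀)ᴴ * U')ᴴ := by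
      rw [Matrix.conjTranspose_mul, Matrix.conjTranspose_conjTranspose]
    rw [this, Matrix.conjTranspose_apply]
  rw [Matrix.add_apply, hconj] at h0
  have := congrArg Complex.re h0
  simp only [Complex.add_re, Complex.star_def, Complex.conj_re, Complex.zero_re] at this
  linarith

/-- **Derivative of the singular values.** Along a differentiable SVD path
`A(t) = U(t) S(t) V(t)ᴴ` with `U, V` unitary and `S = diagonal (s₁,…,sₙ)` real, the
derivative of each singular value is `sᵢ'(t₀) = Re Ãᵢᵢ` where `Ã = U(t₀)ᴴ A'(t₀) V(t₀)`. -/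
theorem deriv_singular_values (n : ℕ) (hn : 1 ≤ n)
    (A U V : ℝ → Matrix (Fin n) (Fin n) ℂ) (s : Fin n → ℝ → ℝ) (t₀ : ℝ)
    (A' U' V' : Matrix (Fin n) (Fin n) ℂ) (s' : Fin n → ℝ)
    (hA' : ∀ i j, HasDerivAt (fun t => A t i j) (A' i j) t₀)
    (hU' : ∀ i j, HasDerivAt (fun t => U t i j) (U' i j) t₀)
    (hV' : ∀ i j, HasDerivAt (fun t => V t i j) (V' i j) t₀)
    (hs' : ∀ i, HasDerivAt (s i) (s' i) t₀)
    (hU : ∀ᶠ t in nhds t₀, U t ∈ Matrix.unitaryGroup (Fin n) ℂ)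
    (hV : ∀ᶠ t in nhds t₀, V t ∈ Matrix.unitaryGroup (Fin n) ℂ)
    (hSVD : ∀ᶠ t in nhds t₀,
      A t = U t * Matrix.diagonal (fun i => ((s i t : ℝ) : ℂ)) * (V t)ᴴ) :
    ∀ i, s' i = (((U t₀)ᴴ * A' * V t₀) i i).re := by
  set D : ℝ → Matrix (Fin n) (Fin n) ℂ :=
    fun t => Matrix.diagonal (fun i => ((s i t : ℝ) : ℂ)) with hD
  set D' : Matrix (Fin n) (Fin n) ℂ := Matrix.diagonal (fun i => ((s' i : ℝ) : ℂ)) with hD'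
  have hDderiv : ∀ i j, HasDerivAt (fun t => D t i j) (D' i j) t₀ := by
    intro i j
    by_cases h : i = j
    · subst h
      simpa [hD, hD', Matrix.diagonal_apply_eq] using (hs' i).ofReal_comp
    · simp only [hD, hD', Matrix.diagonal_apply_ne _ h]
      exact hasDerivAt_const t₀ 0
  -- derivative of the product U D Vᴴ
  have hM : ∀ i j, HasDerivAt (fun t => (U t * D t * (V t)ᴴ) i j)
      (((U' * D t₀ + U t₀ * D') * (V t₀)ᴴ + (U t₀ * D t₀) * V'ᴴ) i j) t₀ :=
    entry_mul_deriv (fun t => U t * D t) (fun t => (V t)ᴴ) _ _ t₀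
      (entry_mul_deriv U D U' D' t₀ hU' hDderiv)
      (entry_conjT_deriv V V' t₀ hV')
  have hAeq : A' = (U' * D t₀ + U t₀ * D') * (V t₀)ᴴ + (U t₀ * D t₀) * V'ᴴ := by
    ext i j
    refine (hA' i j).unique ?_
    refine (hM i j).congr_of_eventuallyEq ?_
    filter_upwards [hSVD] with t ht
    rw [ht]
  have hU₀ : (U t₀)ᴴ * U t₀ = 1 := Matrix.mem_unitaryGroup_iff'.mp hU.self_of_nhds
  have hV₀ : (V t₀)ᴴ * V t₀ = 1 := Matrix.mem_unitaryGroup_iff'.mp hV.self_of_nhds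
  have key : (U t₀)ᴴ * A' * V t₀ = (U t₀)ᴴ * U' * D t₀ + D' + D t₀ * (V'ᴴ * V t₀) := by
    rw [hAeq]
    have e1 : (U t₀)ᴴ * ((U' * D t₀ + U t₀ * D') * (V t₀)ᴴ + U t₀ * D t₀ * V'ᴴ) * V t₀
        = (U t₀)ᴴ * U' * D t₀ * ((V t₀)ᴴ * V t₀) + ((U t₀)ᴴ * U t₀) * D' * ((V t₀)ᴴ * V t₀)
          + ((U t₀)ᴴ * U t₀) * (D t₀ * (V'ᴴ * V t₀)) := by noncomm_ring
    rw [e1, hU₀, hV₀]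
    simp [Matrix.one_mul, Matrix.mul_one, add_assoc]
  intro i
  have hUskew := skew_diag U U' t₀ hU' hU i
  have hVskew : ((V'ᴴ * V t₀) i i).re = 0 := by
    have h := skew_diag V V' t₀ hV' hV i
    have : V'ᴴ * V t₀ = (((V t₀)ᴴ * V')ᴴ) := by
      rw [Matrix.conjTranspose_mul, Matrix.conjTranspose_conjTranspose]
    rw [this, Matrix.conjTranspose_apply]
    simpa using h
  rw [key]
  simp only [Matrix.add_apply]
  have h1 : (((U t₀)ᴴ * U' * D t₀) i i).re = 0 := by
    have : ((U t₀)ᴴ * U' * D t₀) i i = ((U t₀)ᴴ * U') i i * ((s i t₀ : ℝ) : ℂ) := by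
      simp [hD, Matrix.mul_apply, Matrix.diagonal_apply, Finset.mul_sum]
    rw [this]
    simp [Complex.mul_re, hUskew]
  have h2 : ((D t₀ * (V'ᴴ * V t₀)) i i).re = 0 := by
    have : (D t₀ * (V'ᴴ * V t₀)) i i = ((s i t₀ : ℝ) : ℂ) * (V'ᴴ * V t₀) i i := by
      simp [hD, Matrix.mul_apply, Matrix.diagonal_apply]
    rw [this]
    simp [Complex.mul_re, hVskew]
  simp [Complex.add_re, h1, h2, hD', Matrix.diagonal_apply_eq]
end

section
/- (Off-diagonal derivative of the left singular vectors.) Let n ≥ 1 and let A, U, S, V : ℝ → M_n(ℂ) be differentiable at t₀ ∈ ℝ with A(t) = U(t) S(t) V(t)* for all t in a neighborhood of t₀, where U(t) and V(t) are unitary and S(t) is diagonal with real entries s_1(t), …, s_n(t). Set Ã = U(t₀)* A'(t₀) V(t₀), where ' denotes the derivative at t₀ and * the conjugate transpose, and write s_i = s_i(t₀). Then for all i ≠ j: (s_j² − s_i²) · (U(t₀)* U'(t₀))_{ij} = (Ã S(t₀) + S(t₀) Ã*)_{ij} = s_j·Ã_{ij} + s_i·conj(Ã_{ji}). -/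
open Matrix

private lemma matMulDeriv {n : ℕ} {M N : ℝ → Matrix (Fin n) (Fin n) ℂ}
    {M' N' : Matrix (Fin n) (Fin n) ℂ} {t₀ : ℝ}
    (hM : ∀ i j, HasDerivAt (fun t => M t i j) (M' i j) t₀)
    (hN : ∀ i j, HasDerivAt (fun t => N t i j) (N' i j) t₀) :
    ∀ i j, HasDerivAt (fun t => (M t * N t) i j)
      ((M' * N t₀ + M t₀ * N') i j) t₀ := by
  intro i j
  simp only [Matrix.mul_apply, Matrix.add_apply]
  rw [← Finset.sum_add_distrib]
  exact HasDerivAt.fun_sum (fun k _ => (hM i k).mul (hN k j))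

/-- **Off-diagonal derivative of the left singular vectors.** Along a differentiable SVD path
`A(t) = U(t) S(t) V(t)ᴴ` with `U, V` unitary and `S = diagonal (s₁,…,sₙ)` real, for `i ≠ j`:
`(sⱼ² − sᵢ²) (U(t₀)ᴴ U'(t₀))ᵢⱼ = (Atil S(t₀) + S(t₀) Atilᴴ)ᵢⱼ = sⱼ Atilᵢⱼ + sᵢ conj Atilⱼᵢ`,
where `Atil = U(t₀)ᴴ A'(t₀) V(t₀)`. -/
theorem offdiag_deriv_left_singular_vectors (n : ℕ) (hn : 1 ≤ n)
    (A U V : ℝ → Matrix (Fin n) (Fin n) ℂ) (s : Fin n → ℝ) (sf : Fin n → ℝ → ℝ) (t₀ : ℝ)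
    (A' U' V' : Matrix (Fin n) (Fin n) ℂ) (s' : Fin n → ℝ)
    (Atil S₀ : Matrix (Fin n) (Fin n) ℂ)
    (hA' : ∀ i j, HasDerivAt (fun t => A t i j) (A' i j) t₀)
    (hU' : ∀ i j, HasDerivAt (fun t => U t i j) (U' i j) t₀)
    (hV' : ∀ i j, HasDerivAt (fun t => V t i j) (V' i j) t₀)
    (hs' : ∀ i, HasDerivAt (sf i) (s' i) t₀)
    (hs : ∀ i, sf i t₀ = s i)
    (hU : ∀ᶠ t in nhds t₀, U t ∈ Matrix.unitaryGroup (Fin n) ℂ)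
    (hV : ∀ᶠ t in nhds t₀, V t ∈ Matrix.unitaryGroup (Fin n) ℂ)
    (hSVD : ∀ᶠ t in nhds t₀,
      A t = U t * Matrix.diagonal (fun i => ((sf i t : ℝ) : ℂ)) * (V t)ᴴ)
    (hAtil : Atil = (U t₀)ᴴ * A' * V t₀)
    (hS₀ : S₀ = Matrix.diagonal (fun i => ((s i : ℝ) : ℂ))) :
    ∀ i j, i ≠ j →
      (((s j ^ 2 - s i ^ 2 : ℝ) : ℂ) * (((U t₀)ᴴ * U') i j) = (Atil * S₀ + S₀ * Atilᴴ) i j ∧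
        (Atil * S₀ + S₀ * Atilᴴ) i j
          = ((s j : ℝ) : ℂ) * Atil i j + ((s i : ℝ) : ℂ) * starRingEnd ℂ (Atil j i)) := by
  -- derivatives of conjugate transposes
  have hUH : ∀ i j, HasDerivAt (fun t => (U t)ᴴ i j) (U'ᴴ i j) t₀ := fun i j => by
    simpa only [Matrix.conjTranspose_apply] using (hU' j i).star
  have hVH : ∀ i j, HasDerivAt (fun t => (V t)ᴴ i j) (V'ᴴ i j) t₀ := fun i j => by
    simpa only [Matrix.conjTranspose_apply] using (hV' j i).star
  -- derivative of diagonal part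
  set D : ℝ → Matrix (Fin n) (Fin n) ℂ :=
    fun t => Matrix.diagonal (fun i => ((sf i t : ℝ) : ℂ)) with hD
  set D' : Matrix (Fin n) (Fin n) ℂ := Matrix.diagonal (fun i => ((s' i : ℝ) : ℂ)) with hD'
  have hDt₀ : D t₀ = S₀ := by
    simp [hD, hS₀, hs]
  have hDderiv : ∀ i j, HasDerivAt (fun t => D t i j) (D' i j) t₀ := by
    intro i j
    rcases eq_or_ne i j with rfl | hij
    · simpa [hD, hD', Matrix.diagonal_apply_eq] using (hs' i).ofReal_comp
    · simpa [hD, hD', Matrix.diagonal_apply_ne _ hij] using hasDerivAt_const t₀ (0 : ℂ)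
  -- unitarity at t₀
  have hU0 : U t₀ ∈ Matrix.unitaryGroup (Fin n) ℂ := hU.self_of_nhds
  have hV0 : V t₀ ∈ Matrix.unitaryGroup (Fin n) ℂ := hV.self_of_nhds
  have h1 : (U t₀)ᴴ * U t₀ = 1 := hU0.1
  have h2 : (V t₀)ᴴ * V t₀ = 1 := hV0.1
  -- derivative of A from the SVD
  have hprod : ∀ i j, HasDerivAt (fun t => (U t * D t * (V t)ᴴ) i j)
      (((U' * S₀ + U t₀ * D') * (V t₀)ᴴ + (U t₀ * S₀) * V'ᴴ) i j) t₀ := by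
    have h3 := matMulDeriv hU' hDderiv
    rw [hDt₀] at h3
    have h4 := matMulDeriv h3 hVH
    rwa [hDt₀] at h4
  have hA'eq : A' = (U' * S₀ + U t₀ * D') * (V t₀)ᴴ + (U t₀ * S₀) * V'ᴴ := by
    ext i j
    refine (hA' i j).unique ((hprod i j).congr_of_eventuallyEq ?_)
    refine hSVD.mono fun t ht => ?_
    show A t i j = (U t * D t * (V t)ᴴ) i j
    simp only [hD]
    rw [ht]
  -- skew-hermitian relations
  have hPskew : U'ᴴ * U t₀ + (U t₀)ᴴ * U' = 0 := by
    ext i j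
    have hconst : HasDerivAt (fun t => ((U t)ᴴ * U t) i j)
        ((U'ᴴ * U t₀ + (U t₀)ᴴ * U') i j) t₀ := matMulDeriv hUH hU' i j
    have hc : HasDerivAt (fun t => ((U t)ᴴ * U t) i j) (0 : ℂ) t₀ := by
      refine (hasDerivAt_const t₀ ((1 : Matrix (Fin n) (Fin n) ℂ) i j)).congr_of_eventuallyEq ?_
      refine hU.mono fun t ht => ?_
      show ((U t)ᴴ * U t) i j = (1 : Matrix (Fin n) (Fin n) ℂ) i j
      have ht1 : (U t)ᴴ * U t = 1 := ht.1
      rw [ht1]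
    rw [Matrix.zero_apply]
    exact (hc.unique hconst).symm
  have hQskew : V'ᴴ * V t₀ + (V t₀)ᴴ * V' = 0 := by
    ext i j
    have hconst : HasDerivAt (fun t => ((V t)ᴴ * V t) i j)
        ((V'ᴴ * V t₀ + (V t₀)ᴴ * V') i j) t₀ := matMulDeriv hVH hV' i j
    have hc : HasDerivAt (fun t => ((V t)ᴴ * V t) i j) (0 : ℂ) t₀ := by
      refine (hasDerivAt_const t₀ ((1 : Matrix (Fin n) (Fin n) ℂ) i j)).congr_of_eventuallyEq ?_
      refine hV.mono fun t ht => ?_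
      show ((V t)ᴴ * V t) i j = (1 : Matrix (Fin n) (Fin n) ℂ) i j
      have ht1 : (V t)ᴴ * V t = 1 := ht.1
      rw [ht1]
    rw [Matrix.zero_apply]
    exact (hc.unique hconst).symm
  set P : Matrix (Fin n) (Fin n) ℂ := (U t₀)ᴴ * U' with hPdef
  set Q : Matrix (Fin n) (Fin n) ℂ := (V t₀)ᴴ * V' with hQdef
  have hVQ : V'ᴴ * V t₀ = -Q := by
    rw [eq_neg_iff_add_eq_zero]; exact hQskew
  -- formula for Atil
  have h1' : ∀ X : Matrix (Fin n) (Fin n) ℂ, (U t₀)ᴴ * (U t₀ * X) = X := fun X => by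
    rw [← Matrix.mul_assoc, h1, Matrix.one_mul]
  have hAtil' : Atil = P * S₀ + D' + S₀ * (-Q) := by
    rw [hAtil, hA'eq]
    simp only [Matrix.add_mul, Matrix.mul_add, Matrix.mul_assoc, h2, Matrix.mul_one, h1']
    rw [← hVQ]
    simp only [← Matrix.mul_assoc, hPdef]
  intro i j hij
  have hPij : starRingEnd ℂ (P j i) = -P i j := by
    have := congrArg (fun M => M i j) hPskew
    simp only [Matrix.add_apply, Matrix.zero_apply, Matrix.mul_apply] at this
    have h5 : Pᴴ i j + P i j = 0 := by
      have : (U'ᴴ * U t₀) i j + P i j = 0 := by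
        have h6 := congrArg (fun M => M i j) hPskew
        simpa [hPdef] using h6
      rwa [show (U'ᴴ * U t₀) = Pᴴ by rw [hPdef, Matrix.conjTranspose_mul, Matrix.conjTranspose_conjTranspose]] at this
    rw [Matrix.conjTranspose_apply] at h5
    exact eq_neg_of_add_eq_zero_left h5
  have hQij : starRingEnd ℂ (Q j i) = -Q i j := by
    have h5 : Qᴴ i j + Q i j = 0 := by
      have : (V'ᴴ * V t₀) i j + Q i j = 0 := by
        have h6 := congrArg (fun M => M i j) hQskew
        simpa [hQdef] using h6
      rwa [show (V'ᴴ * V t₀) = Qᴴ by rw [hQdef, Matrix.conjTranspose_mul, Matrix.conjTranspose_conjTranspose]] at this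
    rw [Matrix.conjTranspose_apply] at h5
    exact eq_neg_of_add_eq_zero_left h5
  -- entry values of Atil
  have hAij : Atil i j = P i j * (s j : ℂ) + (s i : ℂ) * (-Q i j) := by
    rw [hAtil']
    simp [hS₀, hD', Matrix.mul_diagonal, Matrix.diagonal_mul, Matrix.diagonal_apply_ne _ hij]
  have hAji : Atil j i = P j i * (s i : ℂ) + (s j : ℂ) * (-Q j i) := by
    rw [hAtil']
    simp [hS₀, hD', Matrix.mul_diagonal, Matrix.diagonal_mul, Matrix.diagonal_apply_ne _ hij.symm]
  -- second equality
  have hsecond : (Atil * S₀ + S₀ * Atilᴴ) i j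
      = ((s j : ℝ) : ℂ) * Atil i j + ((s i : ℝ) : ℂ) * starRingEnd ℂ (Atil j i) := by
    simp [hS₀, Matrix.mul_diagonal, Matrix.diagonal_mul, Matrix.add_apply,
      Matrix.conjTranspose_apply]
    ring
  refine ⟨?_, hsecond⟩
  rw [hsecond, hAij, hAji]
  push_cast
  simp only [map_add, _root_.map_mul, map_neg, Complex.conj_ofReal, hPij, hQij]
  ring
end

section
/- (Diagonal-sum identity.) Let n ≥ 1 and let A, U, S, V : ℝ → M_n(ℂ) be differentiable at t₀ ∈ ℝ with A(t) = U(t) S(t) V(t)* for all t in a neighborhood of t₀, where U(t) and V(t) are unitary and S(t) is diagonal with real entries s_1(t), …, s_n(t). Set Ã = U(t₀)* A'(t₀) V(t₀), where ' denotes the derivative at t₀ and * the conjugate transpose, and write s_i = s_i(t₀). Then for every i with s_i ≠ 0: (U(t₀)* U'(t₀))_{ii} + conj((V(t₀)* V'(t₀))_{ii}) = (Ã_{ii} − conj(Ã_{ii})) / (2·s_i) = i·Im(Ã_{ii})/s_i. -/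
open Matrix

lemma entry_deriv_mul {n : ℕ} {M N : ℝ → Matrix (Fin n) (Fin n) ℂ}
    {M' N' : Matrix (Fin n) (Fin n) ℂ} {t₀ : ℝ}
    (hM : ∀ i j, HasDerivAt (fun t => M t i j) (M' i j) t₀)
    (hN : ∀ i j, HasDerivAt (fun t => N t i j) (N' i j) t₀) (i j : Fin n) :
    HasDerivAt (fun t => (M t * N t) i j) ((M' * N t₀ + M t₀ * N') i j) t₀ := by
  simp only [mul_apply, Matrix.add_apply, ← Finset.sum_add_distrib]
  exact HasDerivAt.fun_sum fun k _ => (hM i k).mul (hN k j)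

/-- **Diagonal-sum identity.** Along a differentiable SVD path `A(t) = U(t) S(t) V(t)ᴴ` with
`U, V` unitary and `S = diagonal (s₁,…,sₙ)` real, for every `i` with `sᵢ ≠ 0`:
`(U(t₀)ᴴ U'(t₀))ᵢᵢ + conj (V(t₀)ᴴ V'(t₀))ᵢᵢ = (Ãᵢᵢ − conj Ãᵢᵢ)/(2 sᵢ) = i · Im Ãᵢᵢ / sᵢ`,
where `Ã = U(t₀)ᴴ A'(t₀) V(t₀)`. -/
theorem diagonal_sum_identity (n : ℕ) (hn : 1 ≤ n)
    (A U V : ℝ → Matrix (Fin n) (Fin n) ℂ) (s : Fin n → ℝ) (sf : Fin n → ℝ → ℝ) (t₀ : ℝ)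
    (A' U' V' : Matrix (Fin n) (Fin n) ℂ) (s' : Fin n → ℝ)
    (Atil : Matrix (Fin n) (Fin n) ℂ)
    (hA' : ∀ i j, HasDerivAt (fun t => A t i j) (A' i j) t₀)
    (hU' : ∀ i j, HasDerivAt (fun t => U t i j) (U' i j) t₀)
    (hV' : ∀ i j, HasDerivAt (fun t => V t i j) (V' i j) t₀)
    (hs' : ∀ i, HasDerivAt (sf i) (s' i) t₀)
    (hs : ∀ i, sf i t₀ = s i)
    (hU : ∀ᶠ t in nhds t₀, U t ∈ Matrix.unitaryGroup (Fin n) ℂ)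
    (hV : ∀ᶠ t in nhds t₀, V t ∈ Matrix.unitaryGroup (Fin n) ℂ)
    (hSVD : ∀ᶠ t in nhds t₀,
      A t = U t * Matrix.diagonal (fun i => ((sf i t : ℝ) : ℂ)) * (V t)ᴴ)
    (hAtil : Atil = (U t₀)ᴴ * A' * V t₀) :
    ∀ i, s i ≠ 0 →
      ((((U t₀)ᴴ * U') i i + starRingEnd ℂ (((V t₀)ᴴ * V') i i)
          = (Atil i i - starRingEnd ℂ (Atil i i)) / (2 * ((s i : ℝ) : ℂ))) ∧
        (Atil i i - starRingEnd ℂ (Atil i i)) / (2 * ((s i : ℝ) : ℂ))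
          = Complex.I * (((Atil i i).im : ℝ) : ℂ) / ((s i : ℝ) : ℂ)) := by
  set U₀ := U t₀ with hU₀
  set V₀ := V t₀ with hV₀
  set D : Matrix (Fin n) (Fin n) ℂ := Matrix.diagonal (fun k => ((s k : ℝ) : ℂ)) with hD
  set D' : Matrix (Fin n) (Fin n) ℂ := Matrix.diagonal (fun k => ((s' k : ℝ) : ℂ)) with hD'
  set Dt : ℝ → Matrix (Fin n) (Fin n) ℂ :=
    fun t => Matrix.diagonal (fun k => ((sf k t : ℝ) : ℂ)) with hDt
  have hDt0 : Dt t₀ = D := by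
    simp only [hDt, hD, hs]
  have hDd : ∀ i j, HasDerivAt (fun t => Dt t i j) (D' i j) t₀ := by
    intro i j
    rcases eq_or_ne i j with rfl | h
    · simp only [hDt, hD', diagonal_apply_eq]
      exact (hs' i).ofReal_comp
    · simp only [hDt, hD', diagonal_apply_ne _ h]
      exact hasDerivAt_const _ _
  have hVd : ∀ i j, HasDerivAt (fun t => (V t)ᴴ i j) (V'ᴴ i j) t₀ := by
    intro i j
    simp only [conjTranspose_apply]
    exact (hV' j i).star
  have hUd : ∀ i j, HasDerivAt (fun t => (U t)ᴴ i j) (U'ᴴ i j) t₀ := by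
    intro i j
    simp only [conjTranspose_apply]
    exact (hU' j i).star
  -- derivative of the product path
  have hUD : ∀ i j, HasDerivAt (fun t => (U t * Dt t) i j) ((U' * D + U₀ * D') i j) t₀ := by
    intro i j
    have := entry_deriv_mul hU' hDd i j
    rwa [hDt0] at this
  have hB : ∀ i j, HasDerivAt (fun t => (U t * Dt t * (V t)ᴴ) i j)
      (((U' * D + U₀ * D') * V₀ᴴ + (U₀ * Dt t₀) * V'ᴴ) i j) t₀ :=
    entry_deriv_mul hUD hVd
  have hA'B : A' = (U' * D + U₀ * D') * V₀ᴴ + (U₀ * D) * V'ᴴ := by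
    ext i j
    refine (hA' i j).unique ?_
    have heq : (fun t => A t i j) =ᶠ[nhds t₀] fun t => (U t * Dt t * (V t)ᴴ) i j := by
      filter_upwards [hSVD] with t ht
      rw [ht]
    have := (hB i j).congr_of_eventuallyEq heq
    rwa [hDt0] at this
  have hU0 : U₀ᴴ * U₀ = 1 := by
    rw [← star_eq_conjTranspose]
    exact mem_unitaryGroup_iff'.mp hU.self_of_nhds
  have hV0 : V₀ᴴ * V₀ = 1 := by
    rw [← star_eq_conjTranspose]
    exact mem_unitaryGroup_iff'.mp hV.self_of_nhds
  have hU2 : ∀ X : Matrix (Fin n) (Fin n) ℂ, U₀ᴴ * (U₀ * X) = X := fun X => by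
    rw [← Matrix.mul_assoc, hU0, Matrix.one_mul]
  have hAtil' : Atil = U₀ᴴ * (U' * D) + D' + D * ((V₀ᴴ * V')ᴴ) := by
    rw [hAtil, hA'B]
    rw [conjTranspose_mul, conjTranspose_conjTranspose]
    simp only [Matrix.mul_add, Matrix.add_mul, Matrix.mul_assoc, hV0, Matrix.mul_one, hU2]
  intro i hsi
  set a : ℂ := ((s i : ℝ) : ℂ) with ha
  have haz : a ≠ 0 := by
    simp only [ha, ne_eq, Complex.ofReal_eq_zero]
    exact hsi
  set α : ℂ := ((U₀ᴴ * U') i i) with hα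
  set β : ℂ := ((V₀ᴴ * V') i i) with hβ
  -- entry formula
  have hAii : Atil i i = α * a + ((s' i : ℝ) : ℂ) + a * starRingEnd ℂ β := by
    rw [hAtil']
    simp only [Matrix.add_apply, hD, hD', Matrix.mul_assoc]
    rw [show (Matrix.diagonal fun k => ((s k : ℝ) : ℂ)) * (V₀ᴴ * V')ᴴ =
        Matrix.diagonal (fun k => ((s k : ℝ) : ℂ)) * (V₀ᴴ * V')ᴴ from rfl]
    rw [Matrix.diagonal_mul, Matrix.diagonal_apply_eq, conjTranspose_apply]
    have : (U₀ᴴ * (U' * Matrix.diagonal fun k => ((s k : ℝ) : ℂ))) i i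
        = (U₀ᴴ * U' * Matrix.diagonal fun k => ((s k : ℝ) : ℂ)) i i := by
      rw [Matrix.mul_assoc]
    rw [this, Matrix.mul_diagonal]
    rfl
  -- skew-symmetry of diagonal entries
  have skew : ∀ (W : ℝ → Matrix (Fin n) (Fin n) ℂ) (W' : Matrix (Fin n) (Fin n) ℂ),
      (∀ i j, HasDerivAt (fun t => W t i j) (W' i j) t₀) →
      (∀ᶠ t in nhds t₀, W t ∈ Matrix.unitaryGroup (Fin n) ℂ) →
      starRingEnd ℂ (((W t₀)ᴴ * W') i i) = -(((W t₀)ᴴ * W') i i) := by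
    intro W W' hWd hWu
    have hWc : ∀ i j, HasDerivAt (fun t => (W t)ᴴ i j) (W'ᴴ i j) t₀ := by
      intro i j
      simp only [conjTranspose_apply]
      exact (hWd j i).star
    have h1 := entry_deriv_mul hWc hWd i i
    have h0 : HasDerivAt (fun t => ((W t)ᴴ * W t) i i) 0 t₀ := by
      refine (hasDerivAt_const t₀ (1 : ℂ)).congr_of_eventuallyEq ?_
      filter_upwards [hWu] with t ht
      have : (W t)ᴴ * W t = 1 := by
        rw [← star_eq_conjTranspose]
        exact mem_unitaryGroup_iff'.mp ht
      rw [this, one_apply_eq]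
    have hz := h1.unique h0
    have hconj : (W'ᴴ * W t₀) i i = starRingEnd ℂ (((W t₀)ᴴ * W') i i) := by
      rw [show W'ᴴ * W t₀ = ((W t₀)ᴴ * W')ᴴ by
        rw [conjTranspose_mul, conjTranspose_conjTranspose]]
      rw [conjTranspose_apply, Complex.star_def]
    rw [Matrix.add_apply, hconj] at hz
    linear_combination hz
  have hαs : starRingEnd ℂ α = -α := skew U U' hU' hU
  have hβs : starRingEnd ℂ β = -β := skew V V' hV' hV
  have key : Atil i i - starRingEnd ℂ (Atil i i) = 2 * a * (α + starRingEnd ℂ β) := by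
    simp only [hAii, ha, map_add, _root_.map_mul, Complex.conj_conj, Complex.conj_ofReal]
    linear_combination (-((s i : ℝ) : ℂ)) * hαs + (-((s i : ℝ) : ℂ)) * hβs
  have h2a : (2 : ℂ) * a ≠ 0 := by
    simp only [ne_eq, mul_eq_zero, OfNat.ofNat_ne_zero, false_or]
    exact haz
  refine ⟨?_, ?_⟩
  · rw [key, ha, mul_div_cancel_left₀ _ h2a]
  · rw [Complex.sub_conj]
    rw [ha] at haz ⊢
    field_simp
    rw [Complex.ofReal_mul, Complex.ofReal_ofNat]
end

section
/- (Validity of the SVD Jacobian-vector product rule.) Let n ≥ 1 and let A, U, S, V : ℝ → M_n(ℂ) be differentiable at t₀ ∈ ℝ with A(t) = U(t) S(t) V(t)* for all t in a neighborhood of t₀, where U(t) and V(t) are unitary and S(t) is diagonal with real entries s_1(t), …, s_n(t). Set Ã = U(t₀)* A'(t₀) V(t₀), write s_i = s_i(t₀), and assume the s_i are nonzero with s_i² ≠ s_j² for i ≠ j. Define matrices dŨ, dṼ, dS ∈ M_n(ℂ) by: dŨ_{ij} = (s_j·Ã_{ij} + s_i·conj(Ã_{ji}))/(s_j² − s_i²)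 for i ≠ j, dŨ_{ii} = (Ã_{ii} − conj(Ã_{ii}))/(2·s_i); dṼ_{ij} = (s_i·Ã_{ij} + s_j·conj(Ã_{ji}))/(s_j² − s_i²) for i ≠ j, dṼ_{ii} = 0; and dS diagonal with dS_{ii} = Re(Ã_{ii}). Then U(t₀)·(dŨ·S(t₀) + dS + S(t₀)·dṼ*)·V(t₀)* = A'(t₀). In particular, the derivative A'(t₀) is recovered regardless of how the diagonal sum is split between dŨ and dṼ*. -/
open Matrix

/-- **Validity of the SVD Jacobian-vector product rule.** Along a differentiable SVD path
`A(t) = U(t) S(t) V(t)ᴴ` with `U, V` unitary and `S = diagonal (s₁,…,sₙ)` real, with all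
`sᵢ ≠ 0` and `sᵢ² ≠ sⱼ²` for `i ≠ j`, the matrices `dŨ`, `dṼ`, `dS` built from
`Ã = U(t₀)ᴴ A'(t₀) V(t₀)` by the JVP rule satisfy
`U(t₀) (dŨ S(t₀) + dS + S(t₀) dṼᴴ) V(t₀)ᴴ = A'(t₀)`. -/
theorem svd_jvp_rule_valid (n : ℕ) (hn : 1 ≤ n)
    (A U V : ℝ → Matrix (Fin n) (Fin n) ℂ) (s : Fin n → ℝ) (sf : Fin n → ℝ → ℝ) (t₀ : ℝ)
    (A' U' V' : Matrix (Fin n) (Fin n) ℂ) (s' : Fin n → ℝ)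
    (Atil S₀ dU dV dS : Matrix (Fin n) (Fin n) ℂ)
    (hA' : ∀ i j, HasDerivAt (fun t => A t i j) (A' i j) t₀)
    (hU' : ∀ i j, HasDerivAt (fun t => U t i j) (U' i j) t₀)
    (hV' : ∀ i j, HasDerivAt (fun t => V t i j) (V' i j) t₀)
    (hs' : ∀ i, HasDerivAt (sf i) (s' i) t₀)
    (hs : ∀ i, sf i t₀ = s i)
    (hU : ∀ᶠ t in nhds t₀, U t ∈ Matrix.unitaryGroup (Fin n) ℂ)
    (hV : ∀ᶠ t in nhds t₀, V t ∈ Matrix.unitaryGroup (Fin n) ℂ)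
    (hSVD : ∀ᶠ t in nhds t₀,
      A t = U t * Matrix.diagonal (fun i => ((sf i t : ℝ) : ℂ)) * (V t)ᴴ)
    (hAtil : Atil = (U t₀)ᴴ * A' * V t₀)
    (hS₀ : S₀ = Matrix.diagonal (fun i => ((s i : ℝ) : ℂ)))
    (hsne : ∀ i, s i ≠ 0)
    (hgap : ∀ i j, i ≠ j → s i ^ 2 ≠ s j ^ 2)
    (hdU : ∀ i j, dU i j =
      if i = j then (Atil i i - starRingEnd ℂ (Atil i i)) / (2 * ((s i : ℝ) : ℂ))
      else (((s j : ℝ) : ℂ) * Atil i j + ((s i : ℝ) : ℂ) * starRingEnd ℂ (Atil j i))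
        / (((s j ^ 2 - s i ^ 2 : ℝ) : ℂ)))
    (hdV : ∀ i j, dV i j =
      if i = j then 0
      else (((s i : ℝ) : ℂ) * Atil i j + ((s j : ℝ) : ℂ) * starRingEnd ℂ (Atil j i))
        / (((s j ^ 2 - s i ^ 2 : ℝ) : ℂ)))
    (hdS : dS = Matrix.diagonal (fun i => (((Atil i i).re : ℝ) : ℂ))) :
    U t₀ * (dU * S₀ + dS + S₀ * dVᴴ) * (V t₀)ᴴ = A' := by
  have key : dU * S₀ + dS + S₀ * dVᴴ = Atil := by
    subst hS₀ hdS
    ext i j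
    rw [Matrix.add_apply, Matrix.add_apply, Matrix.mul_diagonal, Matrix.diagonal_mul,
      Matrix.diagonal_apply, Matrix.conjTranspose_apply, hdU, hdV]
    by_cases hij : i = j
    · subst hij
      simp only [if_pos rfl, eq_self_iff_true, if_true]
      have hsi : ((s i : ℝ) : ℂ) ≠ 0 := Complex.ofReal_ne_zero.mpr (hsne i)
      rw [Complex.sub_conj]
      have hmul : ((2 * (Atil i i).im : ℝ) : ℂ) * Complex.I / (2 * ((s i : ℝ) : ℂ)) * ((s i : ℝ) : ℂ)
          = ((Atil i i).im : ℂ) * Complex.I := by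
        push_cast
        field_simp
      rw [hmul]
      simpa [add_comm] using Complex.re_add_im (Atil i i)
    · have hji : j ≠ i := fun h => hij h.symm
      simp only [if_neg hij, if_neg hji, add_zero, star_zero]
      have hden : ((s j ^ 2 - s i ^ 2 : ℝ) : ℂ) ≠ 0 :=
        Complex.ofReal_ne_zero.mpr (sub_ne_zero.mpr fun h => hgap j i hji h)
      have hden' : ((s i ^ 2 - s j ^ 2 : ℝ) : ℂ) ≠ 0 :=
        Complex.ofReal_ne_zero.mpr (sub_ne_zero.mpr fun h => hgap i j hij h)
      have hstar : star ((((s j : ℝ) : ℂ) * Atil j i + ((s i : ℝ) : ℂ) * starRingEnd ℂ (Atil i j))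
          / (((s i ^ 2 - s j ^ 2 : ℝ) : ℂ)))
          = (((s j : ℝ) : ℂ) * starRingEnd ℂ (Atil j i) + ((s i : ℝ) : ℂ) * Atil i j)
          / (((s i ^ 2 - s j ^ 2 : ℝ) : ℂ)) := by
        simp [star_div₀, star_add, Complex.conj_ofReal, mul_comm]
      have hneg : ((s i ^ 2 - s j ^ 2 : ℝ) : ℂ) = -((s j ^ 2 - s i ^ 2 : ℝ) : ℂ) := by
        push_cast; ring
      rw [hstar, hneg, div_neg]
      push_cast at hden ⊢
      field_simp [hden]
      ring
  rw [key, hAtil]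
  have hU0 := hU.self_of_nhds
  have hV0 := hV.self_of_nhds
  have h1 : U t₀ * (U t₀)ᴴ = 1 := by
    have := (Matrix.mem_unitaryGroup_iff).mp hU0
    simpa [Matrix.star_eq_conjTranspose] using this
  have h2 : V t₀ * (V t₀)ᴴ = 1 := by
    have := (Matrix.mem_unitaryGroup_iff).mp hV0
    simpa [Matrix.star_eq_conjTranspose] using this
  calc U t₀ * ((U t₀)ᴴ * A' * V t₀) * (V t₀)ᴴ
      = (U t₀ * (U t₀)ᴴ) * A' * (V t₀ * (V t₀)ᴴ) := by
        simp only [Matrix.mul_assoc]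
    _ = A' := by rw [h1, h2, one_mul, mul_one]
end

section
/- (Recovery of the derivative of the left factor in the non-square case.) Let n ≥ m ≥ 1 and let A : ℝ → ℂ^{n×m}, U : ℝ → ℂ^{n×m}, S : ℝ → ℂ^{m×m}, V : ℝ → ℂ^{m×m} be differentiable at t₀ with A(t) = U(t) S(t) V(t)* for all t in a neighborhood of t₀, where U(t)* U(t) = 𝟙_m, V(t) is unitary, and S(t) is diagonal with real entries, invertible at t₀. Then U'(t₀) = U(t₀)·(U(t₀)* U'(t₀)) + (𝟙_n − U(t₀) U(t₀)*) · A'(t₀) · V(t₀) · S(t₀)^{−1}. -/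
open Matrix

theorem svd_entry_formula {n m : ℕ} (W : Matrix (Fin n) (Fin m) ℂ) (d : Fin m → ℂ)
    (Vm : Matrix (Fin m) (Fin m) ℂ) (i : Fin n) (j : Fin m) :
    (W * Matrix.diagonal d * Vmᴴ) i j = ∑ k, W i k * d k * star (Vm j k) := by
  rw [Matrix.mul_apply]
  refine Finset.sum_congr rfl fun k _ => ?_
  rw [Matrix.mul_diagonal, Matrix.conjTranspose_apply]

/-- **Recovery of the derivative of the left factor in the non-square case.** -/
theorem deriv_left_factor_nonsquare (n m : ℕ) (hm : 1 ≤ m) (hnm : m ≤ n)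
    (A U : ℝ → Matrix (Fin n) (Fin m) ℂ) (V : ℝ → Matrix (Fin m) (Fin m) ℂ)
    (s : Fin m → ℝ → ℝ) (t₀ : ℝ)
    (A' U' : Matrix (Fin n) (Fin m) ℂ) (V' : Matrix (Fin m) (Fin m) ℂ) (s' : Fin m → ℝ)
    (hA' : ∀ i j, HasDerivAt (fun t => A t i j) (A' i j) t₀)
    (hU' : ∀ i j, HasDerivAt (fun t => U t i j) (U' i j) t₀)
    (hV' : ∀ i j, HasDerivAt (fun t => V t i j) (V' i j) t₀)
    (hs' : ∀ i, HasDerivAt (s i) (s' i) t₀)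
    (hU : ∀ᶠ t in nhds t₀, (U t)ᴴ * U t = 1)
    (hV : ∀ᶠ t in nhds t₀, V t ∈ Matrix.unitaryGroup (Fin m) ℂ)
    (hSVD : ∀ᶠ t in nhds t₀,
      A t = U t * Matrix.diagonal (fun i => ((s i t : ℝ) : ℂ)) * (V t)ᴴ)
    (hinv : ∀ i, s i t₀ ≠ 0) :
    U' = U t₀ * ((U t₀)ᴴ * U')
      + (1 - U t₀ * (U t₀)ᴴ) * A' * V t₀
          * (Matrix.diagonal (fun i => ((s i t₀ : ℝ) : ℂ)))⁻¹ := by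
  set S : Matrix (Fin m) (Fin m) ℂ := Matrix.diagonal (fun i => ((s i t₀ : ℝ) : ℂ)) with hS
  set S' : Matrix (Fin m) (Fin m) ℂ := Matrix.diagonal (fun i => ((s' i : ℝ) : ℂ)) with hS'
  -- derivative of A via product rule
  have hAderiv : A' = U' * S * (V t₀)ᴴ + U t₀ * S' * (V t₀)ᴴ + U t₀ * S * V'ᴴ := by
    ext i j
    have h1 : HasDerivAt
        (fun t => ∑ k, U t i k * ((s k t : ℝ) : ℂ) * star (V t j k))
        (∑ k, ((U' i k * ((s k t₀ : ℝ) : ℂ) + U t₀ i k * ((s' k : ℝ) : ℂ)) * star (V t₀ j k)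
          + U t₀ i k * ((s k t₀ : ℝ) : ℂ) * star (V' j k))) t₀ := by
      apply HasDerivAt.fun_sum
      intro k _
      exact (((hU' i k).mul ((hs' k).ofReal_comp)).mul ((hV' j k).star))
    have h2 : HasDerivAt (fun t => A t i j)
        (∑ k, ((U' i k * ((s k t₀ : ℝ) : ℂ) + U t₀ i k * ((s' k : ℝ) : ℂ)) * star (V t₀ j k)
          + U t₀ i k * ((s k t₀ : ℝ) : ℂ) * star (V' j k))) t₀ := by
      apply h1.congr_of_eventuallyEq
      filter_upwards [hSVD] with t ht
      rw [ht, svd_entry_formula]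
    have h3 := (hA' i j).unique h2
    rw [h3]
    have e1 : (U' * S * (V t₀)ᴴ) i j = ∑ k, U' i k * ((s k t₀ : ℝ) : ℂ) * star (V t₀ j k) :=
      svd_entry_formula U' _ _ i j
    have e2 : (U t₀ * S' * (V t₀)ᴴ) i j
        = ∑ k, U t₀ i k * ((s' k : ℝ) : ℂ) * star (V t₀ j k) :=
      svd_entry_formula (U t₀) _ _ i j
    have e3 : (U t₀ * S * V'ᴴ) i j = ∑ k, U t₀ i k * ((s k t₀ : ℝ) : ℂ) * star (V' j k) :=
      svd_entry_formula (U t₀) _ _ i j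
    rw [Matrix.add_apply, Matrix.add_apply, e1, e2, e3, ← Finset.sum_add_distrib,
      ← Finset.sum_add_distrib]
    refine Finset.sum_congr rfl fun k _ => ?_
    ring
  -- invertibility of S
  have hdet : IsUnit S.det := by
    rw [hS, Matrix.det_diagonal]
    apply isUnit_iff_ne_zero.mpr
    apply Finset.prod_ne_zero_iff.mpr
    intro k _
    exact_mod_cast hinv k
  have hSinv : S * S⁻¹ = 1 := Matrix.mul_nonsing_inv S hdet
  -- unitarity at t₀
  have hU0 : (U t₀)ᴴ * U t₀ = 1 := hU.self_of_nhds
  have hV0 : (V t₀)ᴴ * V t₀ = 1 := Matrix.mem_unitaryGroup_iff'.mp hV.self_of_nhds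
  -- compute A' * V t₀ * S⁻¹
  have hX : A' * V t₀ * S⁻¹ = U' + U t₀ * (S' * S⁻¹ + S * (V'ᴴ * V t₀) * S⁻¹) := by
    rw [hAderiv]
    have e1 : U' * S * (V t₀)ᴴ * V t₀ * S⁻¹ = U' := by
      rw [Matrix.mul_assoc (U' * S), hV0, Matrix.mul_one, Matrix.mul_assoc, hSinv,
        Matrix.mul_one]
    have e2 : U t₀ * S' * (V t₀)ᴴ * V t₀ * S⁻¹ = U t₀ * (S' * S⁻¹) := by
      rw [Matrix.mul_assoc (U t₀ * S'), hV0, Matrix.mul_one, Matrix.mul_assoc]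
    have e3 : U t₀ * S * V'ᴴ * V t₀ * S⁻¹ = U t₀ * (S * (V'ᴴ * V t₀) * S⁻¹) := by
      simp only [Matrix.mul_assoc]
    rw [Matrix.add_mul, Matrix.add_mul, Matrix.add_mul, Matrix.add_mul, e1, e2, e3,
      Matrix.mul_add]
    abel
  have hPU : U t₀ * (U t₀)ᴴ * U t₀ = U t₀ := by
    rw [Matrix.mul_assoc, hU0, Matrix.mul_one]
  have key : ∀ Z : Matrix (Fin m) (Fin m) ℂ,
      (1 - U t₀ * (U t₀)ᴴ) * (U t₀ * Z) = 0 := by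
    intro Z
    rw [Matrix.sub_mul, Matrix.one_mul, ← Matrix.mul_assoc, hPU, sub_self]
  have hassoc : (1 - U t₀ * (U t₀)ᴴ) * A' * V t₀ * S⁻¹
      = (1 - U t₀ * (U t₀)ᴴ) * (A' * V t₀ * S⁻¹) := by
    simp only [Matrix.mul_assoc]
  have hP : (1 - U t₀ * (U t₀)ᴴ) * A' * V t₀ * S⁻¹
      = U' - U t₀ * ((U t₀)ᴴ * U') := by
    rw [hassoc, hX, Matrix.mul_add, key _, add_zero, Matrix.sub_mul, Matrix.one_mul,
      Matrix.mul_assoc]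
  rw [hP]
  abel
end

section
/- (Recovery of the derivative of the right factor in the non-square case.) Let m ≥ n ≥ 1 and let A : ℝ → ℂ^{n×m}, U : ℝ → ℂ^{n×n}, S : ℝ → ℂ^{n×n}, V : ℝ → ℂ^{m×n} be differentiable at t₀ with A(t) = U(t) S(t) V(t)* for all t in a neighborhood of t₀, where U(t) is unitary, V(t)* V(t) = 𝟙_n, and S(t) is diagonal with real entries, invertible at t₀. Then V'(t₀)* = (V(t₀)* V'(t₀))* · V(t₀)* + S(t₀)^{−1} · U(t₀)* · A'(t₀) · (𝟙_m − V(t₀) V(t₀)*); equivalently, V'(t₀) = V(t₀)·(V(t₀)* V'(t₀)) + (𝟙_m − V(t₀) V(t₀)*) · A'(t₀)* · U(t₀) · S(t₀)^{−1}. -/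
open Matrix

/-- **Recovery of the derivative of the right factor in the non-square case.** For a
differentiable SVD path `A(t) = U(t) S(t) V(t)ᴴ` with `A : ℝ → ℂ^{n×m}` (`m ≥ n`),
`U(t)` unitary (`n×n`), `V : ℝ → ℂ^{m×n}` with `V(t)ᴴ V(t) = 𝟙ₙ`, and `S(t)` real diagonal
and invertible at `t₀`:
`V'(t₀)ᴴ = (V(t₀)ᴴ V'(t₀))ᴴ V(t₀)ᴴ + S(t₀)⁻¹ U(t₀)ᴴ A'(t₀) (𝟙ₘ − V(t₀) V(t₀)ᴴ)`;
equivalently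
`V'(t₀) = V(t₀) (V(t₀)ᴴ V'(t₀)) + (𝟙ₘ − V(t₀) V(t₀)ᴴ) A'(t₀)ᴴ U(t₀) S(t₀)⁻¹`. -/
theorem deriv_right_factor_nonsquare (n m : ℕ) (hn : 1 ≤ n) (hnm : n ≤ m)
    (A : ℝ → Matrix (Fin n) (Fin m) ℂ) (U : ℝ → Matrix (Fin n) (Fin n) ℂ)
    (V : ℝ → Matrix (Fin m) (Fin n) ℂ)
    (s : Fin n → ℝ → ℝ) (t₀ : ℝ)
    (A' : Matrix (Fin n) (Fin m) ℂ) (U' : Matrix (Fin n) (Fin n) ℂ)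
    (V' : Matrix (Fin m) (Fin n) ℂ) (s' : Fin n → ℝ)
    (hA' : ∀ i j, HasDerivAt (fun t => A t i j) (A' i j) t₀)
    (hU' : ∀ i j, HasDerivAt (fun t => U t i j) (U' i j) t₀)
    (hV' : ∀ i j, HasDerivAt (fun t => V t i j) (V' i j) t₀)
    (hs' : ∀ i, HasDerivAt (s i) (s' i) t₀)
    (hU : ∀ᶠ t in nhds t₀, U t ∈ Matrix.unitaryGroup (Fin n) ℂ)
    (hV : ∀ᶠ t in nhds t₀, (V t)ᴴ * V t = 1)
    (hSVD : ∀ᶠ t in nhds t₀,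
      A t = U t * Matrix.diagonal (fun i => ((s i t : ℝ) : ℂ)) * (V t)ᴴ)
    (hinv : ∀ i, s i t₀ ≠ 0) :
    V'ᴴ = ((V t₀)ᴴ * V')ᴴ * (V t₀)ᴴ
        + (Matrix.diagonal (fun i => ((s i t₀ : ℝ) : ℂ)))⁻¹ * (U t₀)ᴴ * A'
            * (1 - V t₀ * (V t₀)ᴴ) ∧
      V' = V t₀ * ((V t₀)ᴴ * V')
        + (1 - V t₀ * (V t₀)ᴴ) * A'ᴴ * U t₀
            * (Matrix.diagonal (fun i => ((s i t₀ : ℝ) : ℂ)))⁻¹ := by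
  have key : A' = U' * Matrix.diagonal (fun i => ((s i t₀ : ℝ) : ℂ)) * (V t₀)ᴴ
      + U t₀ * Matrix.diagonal (fun i => ((s' i : ℝ) : ℂ)) * (V t₀)ᴴ
      + U t₀ * Matrix.diagonal (fun i => ((s i t₀ : ℝ) : ℂ)) * V'ᴴ := by
    ext i j
    have h1 : HasDerivAt
        (fun t => ∑ k, U t i k * ((s k t : ℝ) : ℂ) * star (V t j k))
        (∑ k, (U' i k * ((s k t₀ : ℝ) : ℂ) * star (V t₀ j k)
            + U t₀ i k * ((s' k : ℝ) : ℂ) * star (V t₀ j k)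
            + U t₀ i k * ((s k t₀ : ℝ) : ℂ) * star (V' j k))) t₀ := by
      refine HasDerivAt.fun_sum fun k _ => ?_
      have hu := hU' i k
      have hsk : HasDerivAt (fun t => ((s k t : ℝ) : ℂ)) ((s' k : ℝ) : ℂ) t₀ :=
        (hs' k).ofReal_comp
      have hv := (hV' j k).star
      have := (hu.fun_mul hsk).fun_mul hv
      exact this.congr_deriv (by ring)
    have h2 : HasDerivAt (fun t => A t i j)
        (∑ k, (U' i k * ((s k t₀ : ℝ) : ℂ) * star (V t₀ j k)
            + U t₀ i k * ((s' k : ℝ) : ℂ) * star (V t₀ j k)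
            + U t₀ i k * ((s k t₀ : ℝ) : ℂ) * star (V' j k))) t₀ := by
      refine h1.congr_of_eventuallyEq (hSVD.mono fun t ht => ?_)
      simp only [ht, Matrix.mul_apply, Matrix.diagonal_apply, mul_ite, mul_zero,
        ite_mul, zero_mul, Finset.sum_ite_eq, Finset.sum_ite_eq',
        Finset.mem_univ, if_true, Matrix.conjTranspose_apply]
    have := (hA' i j).unique h2
    rw [this]
    simp only [Matrix.add_apply, Matrix.mul_apply, Matrix.diagonal_apply,
      mul_ite, mul_zero, ite_mul, zero_mul, Finset.sum_ite_eq,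
      Finset.sum_ite_eq', Finset.mem_univ, if_true,
      Matrix.conjTranspose_apply]
    rw [Finset.sum_add_distrib, Finset.sum_add_distrib]
  set D : Matrix (Fin n) (Fin n) ℂ := Matrix.diagonal (fun i => ((s i t₀ : ℝ) : ℂ)) with hD
  set D' : Matrix (Fin n) (Fin n) ℂ := Matrix.diagonal (fun i => ((s' i : ℝ) : ℂ)) with hD'
  set P : Matrix (Fin m) (Fin m) ℂ := 1 - V t₀ * (V t₀)ᴴ with hP
  have hUt : (U t₀)ᴴ * U t₀ = 1 := by
    have := Matrix.mem_unitaryGroup_iff'.mp hU.self_of_nhds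
    simpa [Matrix.star_eq_conjTranspose] using this
  have hVt : (V t₀)ᴴ * V t₀ = 1 := hV.self_of_nhds
  have hdet : IsUnit D.det := by
    rw [hD, Matrix.det_diagonal]
    refine isUnit_iff_ne_zero.mpr (Finset.prod_ne_zero_iff.mpr fun i _ => ?_)
    exact_mod_cast hinv i
  have hDinv : D⁻¹ * D = 1 := Matrix.nonsing_inv_mul D hdet
  have hVP : (V t₀)ᴴ * P = 0 := by
    rw [hP, Matrix.mul_sub, Matrix.mul_one, ← Matrix.mul_assoc, hVt,
      Matrix.one_mul, sub_self]
  have hAP : A' * P = U t₀ * D * (V'ᴴ * P) := by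
    rw [key, Matrix.add_mul, Matrix.add_mul,
      Matrix.mul_assoc (U' * D) _ _, hVP, Matrix.mul_zero,
      Matrix.mul_assoc (U t₀ * D') _ _, hVP, Matrix.mul_zero,
      Matrix.mul_assoc (U t₀ * D) _ _]
    simp only [zero_add, add_zero]
  have step : D⁻¹ * (U t₀)ᴴ * A' * P = V'ᴴ * P := by
    calc D⁻¹ * (U t₀)ᴴ * A' * P
        = D⁻¹ * ((U t₀)ᴴ * (A' * P)) := by simp only [Matrix.mul_assoc]
      _ = D⁻¹ * ((U t₀)ᴴ * (U t₀ * D * (V'ᴴ * P))) := by rw [hAP]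
      _ = (D⁻¹ * D) * (V'ᴴ * P) := by
          rw [Matrix.mul_assoc (U t₀) D (V'ᴴ * P),
            ← Matrix.mul_assoc ((U t₀)ᴴ) (U t₀) (D * (V'ᴴ * P)), hUt,
            Matrix.one_mul, ← Matrix.mul_assoc]
      _ = V'ᴴ * P := by rw [hDinv, Matrix.one_mul]
  have eq1 : V'ᴴ = ((V t₀)ᴴ * V')ᴴ * (V t₀)ᴴ + D⁻¹ * (U t₀)ᴴ * A' * P := by
    rw [step, Matrix.conjTranspose_mul, Matrix.conjTranspose_conjTranspose,
      hP, Matrix.mul_sub, Matrix.mul_one, ← Matrix.mul_assoc]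
    abel
  refine ⟨eq1, ?_⟩
  have hPH : Pᴴ = P := by
    rw [hP, Matrix.conjTranspose_sub, Matrix.conjTranspose_one,
      Matrix.conjTranspose_mul, Matrix.conjTranspose_conjTranspose]
  have hDH : Dᴴ = D := by
    rw [hD, Matrix.diagonal_conjTranspose]
    have hfun : (star fun i => ((s i t₀ : ℝ) : ℂ)) = fun i => ((s i t₀ : ℝ) : ℂ) := by
      funext i
      simp [Pi.star_apply, Complex.star_def, Complex.conj_ofReal]
    rw [hfun]
  have hDinvH : D⁻¹ᴴ = D⁻¹ := by
    rw [Matrix.conjTranspose_nonsing_inv, hDH]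
  have h := congrArg Matrix.conjTranspose eq1
  simp only [Matrix.conjTranspose_add, Matrix.conjTranspose_mul,
    Matrix.conjTranspose_conjTranspose, hPH, hDinvH] at h
  simpa only [Matrix.mul_assoc] using h
end
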